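/- arXiv:1009.5019 — 9 statements merged into one kernel-verified Lean document; each statement's English description precedes it below -/
import Mathlib

section
/- The smallest subset M of the rationals that contains 1 and is closed under the operations q ↦ 1/q (for q ∈ M, q ≠ 0) and (q₁, q₂) ↦ q₁ + q₂ (for q₁, q₂ ∈ M) is exactly the set of all positive rationals: M = {q ∈ ℚ : q > 0}. -/
lemma key_mem (S : Set ℚ) (h1 : 1 ∈ S) (hinv : ∀ q ∈ S, q ≠ 0 → q⁻¹ ∈ S)
    (hadd : ∀ q₁ ∈ S, ∀ q₂ ∈ S, q₁ + q₂ ∈ S) :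
    ∀ n a b : ℕ, a + b ≤ n → 0 < a → 0 < b → (a : ℚ) / b ∈ S := by
  intro n
  induction n with
  | zero => intro a b hab ha hb; omega
  | succ n ih =>
    intro a b hab ha hb
    rcases lt_trichotomy a b with h | h | h
    · have hba : (b : ℚ) / a ∈ S := by
        have h1' : (b : ℚ) / a = ((b - a : ℕ) : ℚ) / a + 1 := by
          have : ((b - a : ℕ) : ℚ) = (b : ℚ) - a := by
            push_cast [Nat.cast_sub h.le]; ring
          rw [this]
          field_simp; ring
        rw [h1']
        exact hadd _ (ih (b - a) a (by omega) (by omega) ha) _ h1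
      have := hinv _ hba (by positivity)
      rwa [inv_div] at this
    · subst h
      have : (a : ℚ) / a = 1 := by
        rw [div_self]; positivity
      rw [this]; exact h1
    · have h1' : (a : ℚ) / b = ((a - b : ℕ) : ℚ) / b + 1 := by
        have : ((a - b : ℕ) : ℚ) = (a : ℚ) - b := by
          push_cast [Nat.cast_sub h.le]; ring
        rw [this]; field_simp; ring
      rw [h1']
      exact hadd _ (ih (a - b) b (by omega) (by omega) hb) _ h1

theorem stmt_1 :
    ⋂₀ {S : Set ℚ | 1 ∈ S ∧ (∀ q ∈ S, q ≠ 0 → q⁻¹ ∈ S) ∧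
        ∀ q₁ ∈ S, ∀ q₂ ∈ S, q₁ + q₂ ∈ S} = {q : ℚ | 0 < q} := by
  ext q
  simp only [Set.mem_sInter, Set.mem_setOf_eq]
  constructor
  · intro h
    exact h {q : ℚ | 0 < q} ⟨Set.mem_setOf_eq ▸ one_pos, fun q hq hq0 => show 0 < q⁻¹ from inv_pos.mpr hq,
      fun q₁ h₁ q₂ h₂ => show 0 < q₁ + q₂ from add_pos h₁ h₂⟩
  · intro hq S hS
    obtain ⟨h1, hinv, hadd⟩ := hS
    have hnum : 0 < q.num := Rat.num_pos.mpr hq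
    have hq' : q = ((q.num.toNat : ℕ) : ℚ) / ((q.den : ℕ) : ℚ) := by
      have h2 : ((q.num.toNat : ℕ) : ℚ) = (q.num : ℚ) := by
        exact_mod_cast Int.toNat_of_nonneg hnum.le
      rw [h2]
      exact (Rat.num_div_den q).symm
    rw [hq']
    exact key_mem S h1 hinv hadd (q.num.toNat + q.den) _ _ le_rfl
      (by omega) q.pos
end

section
/- Define finite sets of rationals by L₁ = U₁ = W₁ = ∅ and, for every i ≥ 1, L_{i+1} = { q/(1+q) : q ∈ W_i ∪ {1} }, U_{i+1} = { (1+q)/(1+3q) : q ∈ W_i ∪ {1} }, and W_{i+1} = L_{i+1} ∪ U_{i+1}. Then for every i ≥ 3: (1) the minimum element of L_i is 1/i and the maximum element of L_i is 1/2; (2) if q₁ < q₂ are consecutive elements of L_i (no element of L_i lies strictly between them), then q₂ − q₁ ≤ 1/i; (3) the maximum element of U_i is i/(i+2) and the minimum element of U_i is 1/2; (4) if q₁ < q₂ are consecutive elements of U_i, then q₂ − q₁ ≤ 2/(i+2). -/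
/-- The map `q ↦ q/(1+q)`. -/
def Lmap (q : ℚ) : ℚ := q / (1 + q)

/-- The map `q ↦ (1+q)/(1+3q)`. -/
def Umap (q : ℚ) : ℚ := (1 + q) / (1 + 3 * q)

/-- `Wset i` is the set `W_i`: `W₁ = ∅` and `W_{i+1} = L_{i+1} ∪ U_{i+1}`. -/
def Wset : ℕ → Set ℚ
  | 0 => ∅
  | 1 => ∅
  | (n + 2) => (Lmap '' (Wset (n + 1) ∪ {1})) ∪ (Umap '' (Wset (n + 1) ∪ {1}))

/-- `Lset i` is the set `L_i`: `L₁ = ∅` and `L_{i+1} = { q/(1+q) : q ∈ W_i ∪ {1} }`. -/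
def Lset : ℕ → Set ℚ
  | 0 => ∅
  | 1 => ∅
  | (n + 2) => Lmap '' (Wset (n + 1) ∪ {1})

/-- `Uset i` is the set `U_i`: `U₁ = ∅` and `U_{i+1} = { (1+q)/(1+3q) : q ∈ W_i ∪ {1} }`. -/
def Uset : ℕ → Set ℚ
  | 0 => ∅
  | 1 => ∅
  | (n + 2) => Umap '' (Wset (n + 1) ∪ {1})

lemma Lmap_sub {a b : ℚ} (ha : 0 < 1 + a) (hb : 0 < 1 + b) :
    Lmap b - Lmap a = (b - a) / ((1 + a) * (1 + b)) := by
  rw [Lmap, Lmap]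
  field_simp
  ring

lemma Umap_sub {a b : ℚ} (ha : 0 < 1 + 3 * a) (hb : 0 < 1 + 3 * b) :
    Umap b - Umap a = 2 * (a - b) / ((1 + 3 * a) * (1 + 3 * b)) := by
  rw [Umap, Umap]
  rw [div_sub_div _ _ hb.ne' ha.ne', div_eq_div_iff (mul_ne_zero hb.ne' ha.ne') (mul_ne_zero ha.ne' hb.ne')]
  ring

lemma Lmap_le {a b : ℚ} (ha : 0 < 1 + a) (hb : 0 < 1 + b) (h : a ≤ b) :
    Lmap a ≤ Lmap b := by
  have h1 := Lmap_sub ha hb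
  have h2 : 0 ≤ (b - a) / ((1 + a) * (1 + b)) :=
    div_nonneg (by linarith) (by positivity)
  linarith

lemma Lmap_lt {a b : ℚ} (ha : 0 < 1 + a) (hb : 0 < 1 + b) (h : a < b) :
    Lmap a < Lmap b := by
  have h1 := Lmap_sub ha hb
  have h2 : 0 < (b - a) / ((1 + a) * (1 + b)) :=
    div_pos (by linarith) (by positivity)
  linarith

lemma Umap_le {a b : ℚ} (ha : 0 < 1 + 3 * a) (hb : 0 < 1 + 3 * b) (h : b ≤ a) :
    Umap a ≤ Umap b := by
  have h1 := Umap_sub ha hb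
  have h2 : 0 ≤ 2 * (a - b) / ((1 + 3 * a) * (1 + 3 * b)) :=
    div_nonneg (by linarith) (by positivity)
  linarith

lemma Umap_lt {a b : ℚ} (ha : 0 < 1 + 3 * a) (hb : 0 < 1 + 3 * b) (h : b < a) :
    Umap a < Umap b := by
  have h1 := Umap_sub ha hb
  have h2 : 0 < 2 * (a - b) / ((1 + 3 * a) * (1 + 3 * b)) :=
    div_pos (by linarith) (by positivity)
  linarith

lemma Lmap_one : Lmap 1 = 1 / 2 := by norm_num [Lmap]

lemma Umap_one : Umap 1 = 1 / 2 := by norm_num [Umap]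

lemma Lmap_inv {x : ℚ} (hx : 0 < x) : Lmap (1 / x) = 1 / (x + 1) := by
  have hx' : x ≠ 0 := hx.ne'
  rw [Lmap, div_eq_div_iff (by positivity) (by positivity)]
  field_simp

lemma Umap_inv {x : ℚ} (hx : 0 < x) : Umap (1 / x) = (x + 1) / (x + 3) := by
  have hx' : x ≠ 0 := hx.ne'
  rw [Umap, div_eq_div_iff (by positivity) (by positivity)]
  field_simp

/-- The combined inductive invariant about `W_{n+2}`. -/
def Sgood (n : ℕ) : Prop :=
  (1 / ((n : ℚ) + 2) ∈ Wset (n + 2)) ∧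
  (((n : ℚ) + 2) / ((n : ℚ) + 4) ∈ Wset (n + 2)) ∧
  (∀ q ∈ Wset (n + 2), 1 / ((n : ℚ) + 2) ≤ q ∧ q ≤ ((n : ℚ) + 2) / ((n : ℚ) + 4)) ∧
  (∀ q₁ q₂ : ℚ, q₁ ∈ Wset (n + 2) ∪ {1} → q₂ ∈ Wset (n + 2) ∪ {1} → q₁ < q₂ →
    (∀ q₃ ∈ Wset (n + 2) ∪ {1}, ¬(q₁ < q₃ ∧ q₃ < q₂)) →
    q₂ - q₁ ≤ (1 + q₁) * (1 + q₂) / ((n : ℚ) + 3))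

lemma S_bounds {n : ℕ} (h : Sgood n) {p : ℚ} (hp : p ∈ Wset (n + 2) ∪ {1}) :
    1 / ((n : ℚ) + 2) ≤ p ∧ p ≤ 1 := by
  have hn : (0:ℚ) < (n:ℚ) + 2 := by positivity
  rcases hp with hp | hp
  · obtain ⟨h1, h2⟩ := h.2.2.1 p hp
    refine ⟨h1, h2.trans ?_⟩
    rw [div_le_one (by positivity)]
    linarith
  · rw [Set.mem_singleton_iff] at hp
    subst hp
    constructor
    · rw [div_le_one hn]; linarith
    · exact le_refl 1

lemma S_pos {n : ℕ} (h : Sgood n) {p : ℚ} (hp : p ∈ Wset (n + 2) ∪ {1}) :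
    0 < p := by
  have := (S_bounds h hp).1
  have hn : (0:ℚ) < 1 / ((n:ℚ) + 2) := by positivity
  linarith

lemma gap_L {n : ℕ} (h : Sgood n) {T : Set ℚ}
    (hT : Lmap '' (Wset (n + 2) ∪ {1}) ⊆ T)
    {q₁ q₂ : ℚ} (h1 : q₁ ∈ Lmap '' (Wset (n + 2) ∪ {1}))
    (h2 : q₂ ∈ Lmap '' (Wset (n + 2) ∪ {1})) (hlt : q₁ < q₂)
    (hcons : ∀ q₃ ∈ T, ¬(q₁ < q₃ ∧ q₃ < q₂)) :
    q₂ - q₁ ≤ 1 / ((n : ℚ) + 3) := by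
  obtain ⟨a, ha, rfl⟩ := h1
  obtain ⟨b, hb, rfl⟩ := h2
  have h1a : 0 < 1 + a := by have := S_pos h ha; linarith
  have h1b : 0 < 1 + b := by have := S_pos h hb; linarith
  have hab : a < b := by
    by_contra hc
    push_neg at hc
    exact absurd (Lmap_le h1b h1a hc) (not_le.2 hlt)
  have hconsS : ∀ q₃ ∈ Wset (n+2) ∪ {1}, ¬(a < q₃ ∧ q₃ < b) := by
    rintro p hp ⟨hl, hr⟩
    have hp1 : 0 < 1 + p := by have := S_pos h hp; linarith
    exact hcons (Lmap p) (hT ⟨p, hp, rfl⟩) ⟨Lmap_lt h1a hp1 hl, Lmap_lt hp1 h1b hr⟩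
  have hgap := h.2.2.2 a b ha hb hab hconsS
  have hgap2 : (b - a) * ((n:ℚ) + 3) ≤ (1 + a) * (1 + b) :=
    (le_div_iff₀ (by positivity)).mp hgap
  rw [Lmap_sub h1a h1b, div_le_div_iff₀ (by positivity) (by positivity)]
  linarith

lemma gap_U {n : ℕ} (h : Sgood n) {T : Set ℚ}
    (hT : Umap '' (Wset (n + 2) ∪ {1}) ⊆ T)
    {q₁ q₂ : ℚ} (h1 : q₁ ∈ Umap '' (Wset (n + 2) ∪ {1}))
    (h2 : q₂ ∈ Umap '' (Wset (n + 2) ∪ {1})) (hlt : q₁ < q₂)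
    (hcons : ∀ q₃ ∈ T, ¬(q₁ < q₃ ∧ q₃ < q₂)) :
    ∃ a b : ℚ, 1/((n:ℚ)+2) ≤ b ∧ b < a ∧ a ≤ 1 ∧ q₁ = Umap a ∧ q₂ = Umap b ∧
      a - b ≤ (1 + a) * (1 + b) / ((n : ℚ) + 3) := by
  obtain ⟨a, ha, rfl⟩ := h1
  obtain ⟨b, hb, rfl⟩ := h2
  have hbpos := S_pos h hb
  have hapos := S_pos h ha
  have h3a : 0 < 1 + 3 * a := by linarith
  have h3b : 0 < 1 + 3 * b := by linarith
  have hab : b < a := by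
    by_contra hc
    push_neg at hc
    exact absurd (Umap_le h3b h3a hc) (not_le.2 hlt)
  have hconsS : ∀ q₃ ∈ Wset (n+2) ∪ {1}, ¬(b < q₃ ∧ q₃ < a) := by
    rintro p hp ⟨hl, hr⟩
    have hp3 : 0 < 1 + 3 * p := by have := S_pos h hp; linarith
    exact hcons (Umap p) (hT ⟨p, hp, rfl⟩) ⟨Umap_lt h3a hp3 hr, Umap_lt hp3 h3b hl⟩
  have hgap := h.2.2.2 b a hb ha hab hconsS
  exact ⟨a, b, (S_bounds h hb).1, hab, (S_bounds h ha).2, rfl, rfl, by rw [show (1+a)*(1+b) = (1+b)*(1+a) from mul_comm _ _]; exact hgap⟩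

lemma Sgood_zero : Sgood 0 := by
  have hW2 : Wset 2 = {(1/2 : ℚ)} := by
    ext x
    simp [Wset, Lmap, Umap]
    norm_num
  constructor
  · rw [show ((0:ℕ):ℚ) + 2 = 2 by norm_num, hW2]; norm_num
  constructor
  · rw [hW2]
    norm_num
  constructor
  · intro q hq
    rw [hW2, Set.mem_singleton_iff] at hq
    subst hq
    norm_num
  · intro q₁ q₂ hq₁ hq₂ hlt hcons
    rw [hW2] at hq₁ hq₂
    simp only [Set.mem_union, Set.mem_singleton_iff] at hq₁ hq₂
    rcases hq₁ with rfl | rfl <;> rcases hq₂ with rfl | rfl <;> norm_num at hlt <;> norm_num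

lemma Sgood_step (n : ℕ) (h : Sgood n) : Sgood (n + 1) := by
  have hj : (0:ℚ) < (n:ℚ) + 2 := by positivity
  have hcast : ((n+1:ℕ):ℚ) = (n:ℚ) + 1 := by push_cast; ring
  have hW : Wset (n+1+2) = Lmap '' (Wset (n+2) ∪ {1}) ∪ Umap '' (Wset (n+2) ∪ {1}) := rfl
  -- image bounds
  have hLlo : ∀ p ∈ Wset (n+2) ∪ {1}, 1/((n:ℚ)+3) ≤ Lmap p := by
    intro p hp
    have hb := S_bounds h hp
    have hp1 : 0 < 1 + p := by have := S_pos h hp; linarith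
    have h1 : 0 < 1 + 1/((n:ℚ)+2) := by positivity
    calc 1/((n:ℚ)+3) = Lmap (1/((n:ℚ)+2)) := by
            rw [Lmap_inv hj]; ring_nf
      _ ≤ Lmap p := Lmap_le h1 hp1 hb.1
  have hLhi : ∀ p ∈ Wset (n+2) ∪ {1}, Lmap p ≤ 1/2 := by
    intro p hp
    have hb := S_bounds h hp
    have hp1 : 0 < 1 + p := by have := S_pos h hp; linarith
    calc Lmap p ≤ Lmap 1 := Lmap_le hp1 (by norm_num) hb.2
      _ = 1/2 := Lmap_one
  have hUlo : ∀ p ∈ Wset (n+2) ∪ {1}, 1/2 ≤ Umap p := by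
    intro p hp
    have hb := S_bounds h hp
    have hp3 : 0 < 1 + 3*p := by have := S_pos h hp; linarith
    calc (1:ℚ)/2 = Umap 1 := Umap_one.symm
      _ ≤ Umap p := Umap_le (by norm_num) hp3 hb.2
  have hUhi : ∀ p ∈ Wset (n+2) ∪ {1}, Umap p ≤ ((n:ℚ)+3)/((n:ℚ)+5) := by
    intro p hp
    have hb := S_bounds h hp
    have hp3 : 0 < 1 + 3*p := by have := S_pos h hp; linarith
    have h1 : 0 < 1 + 3*(1/((n:ℚ)+2)) := by positivity
    calc Umap p ≤ Umap (1/((n:ℚ)+2)) := Umap_le hp3 h1 hb.1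
      _ = ((n:ℚ)+3)/((n:ℚ)+5) := by rw [Umap_inv hj]; ring_nf
  have hHalfL : (1/2 : ℚ) ∈ Lmap '' (Wset (n+2) ∪ {1}) :=
    ⟨1, Or.inr rfl, Lmap_one⟩
  have hHalfU : (1/2 : ℚ) ∈ Umap '' (Wset (n+2) ∪ {1}) :=
    ⟨1, Or.inr rfl, Umap_one⟩
  have hTopU : ((n:ℚ)+3)/((n:ℚ)+5) ∈ Umap '' (Wset (n+2) ∪ {1}) :=
    ⟨1/((n:ℚ)+2), Or.inl h.1, by rw [Umap_inv hj]; ring_nf⟩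
  refine ⟨?_, ?_, ?_, ?_⟩
  · -- min element
    rw [hW]
    refine Or.inl ⟨1/((n:ℚ)+2), Or.inl h.1, ?_⟩
    rw [Lmap_inv hj, hcast]
    ring_nf
  · -- max element
    rw [hW, hcast]
    refine Or.inr ⟨1/((n:ℚ)+2), Or.inl h.1, ?_⟩
    rw [Umap_inv hj]
    ring_nf
  · -- bounds
    intro q hq
    rw [hW] at hq
    rw [hcast]
    have e1 : (n:ℚ) + 1 + 2 = (n:ℚ) + 3 := by ring
    have e2 : (n:ℚ) + 1 + 4 = (n:ℚ) + 5 := by ring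
    rw [e1, e2]
    have hhalf : (1:ℚ)/2 ≤ ((n:ℚ)+3)/((n:ℚ)+5) := by
      rw [div_le_div_iff₀ (by norm_num) (by positivity)]
      linarith
    have hhalf2 : (1:ℚ)/((n:ℚ)+3) ≤ 1/2 := by
      rw [div_le_div_iff₀ (by positivity) (by norm_num)]
      linarith
    rcases hq with ⟨p, hp, rfl⟩ | ⟨p, hp, rfl⟩
    · exact ⟨hLlo p hp, (hLhi p hp).trans hhalf⟩
    · exact ⟨hhalf2.trans (hUlo p hp), hUhi p hp⟩
  · -- gap condition
    intro q₁ q₂ hq₁ hq₂ hlt hcons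
    rw [hcast]
    have e3 : (n:ℚ) + 1 + 3 = (n:ℚ) + 4 := by ring
    rw [e3]
    have h4 : (0:ℚ) < (n:ℚ) + 4 := by positivity
    have h3 : (0:ℚ) < (n:ℚ) + 3 := by positivity
    have h5 : (0:ℚ) < (n:ℚ) + 5 := by positivity
    have hhalfmem : (1/2 : ℚ) ∈ Wset (n+1+2) ∪ {1} := Or.inl (hW ▸ Or.inl hHalfL)
    have htopmem : ((n:ℚ)+3)/((n:ℚ)+5) ∈ Wset (n+1+2) ∪ {1} := Or.inl (hW ▸ Or.inr hTopU)
    have htoplt1 : ((n:ℚ)+3)/((n:ℚ)+5) < 1 := by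
      rw [div_lt_one h5]; linarith
    have hq2le1 : q₂ ≤ 1 := by
      rcases hq₂ with hq₂ | hq₂
      · rw [hW] at hq₂
        rcases hq₂ with ⟨p, hp, rfl⟩ | ⟨p, hp, rfl⟩
        · linarith [hLhi p hp]
        · linarith [hUhi p hp]
      · rw [Set.mem_singleton_iff] at hq₂; rw [hq₂]
    by_cases hA : q₂ ≤ 1/2
    · -- both in L image
      have hq1L : q₁ ∈ Lmap '' (Wset (n+2) ∪ {1}) := by
        rcases hq₁ with hq₁ | hq₁
        · rw [hW] at hq₁
          rcases hq₁ with h' | h'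
          · exact h'
          · exfalso; rcases h' with ⟨p, hp, rfl⟩; linarith [hUlo p hp]
        · rw [Set.mem_singleton_iff] at hq₁; exfalso; rw [hq₁] at hlt; linarith
      have hq2L : q₂ ∈ Lmap '' (Wset (n+2) ∪ {1}) := by
        rcases hq₂ with hq₂ | hq₂
        · rw [hW] at hq₂
          rcases hq₂ with h' | h'
          · exact h'
          · rcases h' with ⟨p, hp, rfl⟩
            have : Umap p = 1/2 := le_antisymm hA (hUlo p hp)
            rw [this]; exact hHalfL
        · rw [Set.mem_singleton_iff] at hq₂; exfalso; rw [hq₂] at hA; linarith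
      have hT : Lmap '' (Wset (n+2) ∪ {1}) ⊆ Wset (n+1+2) ∪ {1} := by
        intro x hx
        exact Or.inl (hW ▸ Or.inl hx)
      have hgap := gap_L h hT hq1L hq2L hlt hcons
      have hgap2 : (q₂ - q₁) * ((n:ℚ)+3) ≤ 1 := by
        have := (le_div_iff₀ h3).mp hgap
        linarith
      have hq1lo : 1/((n:ℚ)+3) ≤ q₁ := by
        obtain ⟨p, hp, rfl⟩ := hq1L
        exact hLlo p hp
      have hq1lo' : 1 ≤ q₁ * ((n:ℚ)+3) := by
        have := (div_le_iff₀ h3).mp hq1lo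
        linarith
      have hq1pos : 0 < q₁ := by nlinarith
      have hq2pos : 0 < q₂ := lt_trans hq1pos hlt
      rw [le_div_iff₀ h4]
      nlinarith [mul_pos hq1pos hq2pos]
    · push_neg at hA
      have hq1half : 1/2 ≤ q₁ := by
        by_contra hc
        push_neg at hc
        exact hcons (1/2) hhalfmem ⟨hc, hA⟩
      by_cases hC : q₂ = 1
      · -- top gap
        subst hC
        have hq1top : ((n:ℚ)+3)/((n:ℚ)+5) ≤ q₁ := by
          by_contra hc
          push_neg at hc
          exact hcons _ htopmem ⟨hc, htoplt1⟩
        have hq1top' : (n:ℚ)+3 ≤ q₁ * ((n:ℚ)+5) := by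
          have := (div_le_iff₀ h5).mp hq1top
          linarith
        rw [le_div_iff₀ h4]
        nlinarith
      · -- both in U image
        have hq2lt1 : q₂ < 1 := lt_of_le_of_ne hq2le1 hC
        have hq2U : q₂ ∈ Umap '' (Wset (n+2) ∪ {1}) := by
          rcases hq₂ with hq₂ | hq₂
          · rw [hW] at hq₂
            rcases hq₂ with h' | h'
            · exfalso; rcases h' with ⟨p, hp, rfl⟩; linarith [hLhi p hp]
            · exact h'
          · rw [Set.mem_singleton_iff] at hq₂; exact absurd hq₂ hC
        have hq1U : q₁ ∈ Umap '' (Wset (n+2) ∪ {1}) := by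
          rcases hq₁ with hq₁ | hq₁
          · rw [hW] at hq₁
            rcases hq₁ with h' | h'
            · rcases h' with ⟨p, hp, rfl⟩
              have : Lmap p = 1/2 := le_antisymm (hLhi p hp) hq1half
              rw [this]; exact hHalfU
            · exact h'
          · rw [Set.mem_singleton_iff] at hq₁; exfalso; rw [hq₁] at hlt; linarith
        have hT : Umap '' (Wset (n+2) ∪ {1}) ⊆ Wset (n+1+2) ∪ {1} := by
          intro x hx
          exact Or.inl (hW ▸ Or.inr hx)
        obtain ⟨a, b, hblo, hba, ha1, hq1e, hq2e, hgap⟩ := gap_U h hT hq1U hq2U hlt hcons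
        have hbpos : 0 < b := lt_of_lt_of_le (by positivity) hblo
        have hapos : 0 < a := lt_trans hbpos hba
        have h3a : 0 < 1 + 3*a := by linarith
        have h3b : 0 < 1 + 3*b := by linarith
        have hgap2 : (a - b) * ((n:ℚ)+3) ≤ (1+a)*(1+b) := by
          have := (le_div_iff₀ h3).mp hgap
          linarith
        have hsub : q₂ - q₁ = 2*(a-b)/((1+3*a)*(1+3*b)) := by
          rw [hq1e, hq2e]; exact Umap_sub h3a h3b
        have heq : (1 + q₁) * (1 + q₂) / ((n:ℚ)+4)
            = (2+4*a)*(2+4*b) / ((1+3*a)*(1+3*b)*((n:ℚ)+4)) := by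
          rw [hq1e, hq2e, Umap, Umap]
          field_simp
          ring
        rw [hsub, heq, div_le_div_iff₀ (by positivity) (by positivity)]
        have hkey : 2*(a-b)*((n:ℚ)+4) ≤ (2+4*a)*(2+4*b) := by
          nlinarith [hgap2, mul_pos hapos hbpos, hba]
        nlinarith [mul_pos (mul_pos h3a h3b) h4, hkey, mul_pos h3a h3b]

lemma Sgood_all : ∀ n, Sgood n := by
  intro n
  induction n with
  | zero => exact Sgood_zero
  | succ k ih => exact Sgood_step k ih

theorem stmt_2 (i : ℕ) (hi : 3 ≤ i) :
    IsLeast (Lset i) (1 / (i : ℚ)) ∧ IsGreatest (Lset i) (1 / 2) ∧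
    (∀ q₁ q₂ : ℚ, q₁ ∈ Lset i → q₂ ∈ Lset i → q₁ < q₂ →
      (∀ q₃ ∈ Lset i, ¬(q₁ < q₃ ∧ q₃ < q₂)) → q₂ - q₁ ≤ 1 / (i : ℚ)) ∧
    IsGreatest (Uset i) ((i : ℚ) / ((i : ℚ) + 2)) ∧ IsLeast (Uset i) (1 / 2) ∧
    (∀ q₁ q₂ : ℚ, q₁ ∈ Uset i → q₂ ∈ Uset i → q₁ < q₂ →
      (∀ q₃ ∈ Uset i, ¬(q₁ < q₃ ∧ q₃ < q₂)) → q₂ - q₁ ≤ 2 / ((i : ℚ) + 2)) := by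
  obtain ⟨n, rfl⟩ : ∃ n, i = n + 3 := ⟨i - 3, by omega⟩
  have h := Sgood_all n
  have hj : (0:ℚ) < (n:ℚ) + 2 := by positivity
  have h3 : (0:ℚ) < (n:ℚ) + 3 := by positivity
  have h5 : (0:ℚ) < (n:ℚ) + 5 := by positivity
  have hcast : ((n+3:ℕ):ℚ) = (n:ℚ) + 3 := by push_cast; ring
  have hLset : Lset (n+3) = Lmap '' (Wset (n+2) ∪ {1}) := rfl
  have hUset : Uset (n+3) = Umap '' (Wset (n+2) ∪ {1}) := rfl
  refine ⟨⟨?_, ?_⟩, ⟨?_, ?_⟩, ?_, ⟨?_, ?_⟩, ⟨?_, ?_⟩, ?_⟩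
  · -- 1/(n+3) ∈ Lset
    rw [hLset]
    refine ⟨1/((n:ℚ)+2), Or.inl h.1, ?_⟩
    rw [Lmap_inv hj, hcast]
    ring_nf
  · -- lower bound for Lset
    intro q hq
    rw [hLset] at hq
    obtain ⟨p, hp, rfl⟩ := hq
    have hb := S_bounds h hp
    have hp1 : 0 < 1 + p := by have := S_pos h hp; linarith
    have h1 : 0 < 1 + 1/((n:ℚ)+2) := by positivity
    calc 1/((n+3:ℕ):ℚ) = Lmap (1/((n:ℚ)+2)) := by
          rw [Lmap_inv hj, hcast]; ring_nf
      _ ≤ Lmap p := Lmap_le h1 hp1 hb.1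
  · -- 1/2 ∈ Lset
    rw [hLset]
    exact ⟨1, Or.inr rfl, Lmap_one⟩
  · -- upper bound for Lset
    intro q hq
    rw [hLset] at hq
    obtain ⟨p, hp, rfl⟩ := hq
    have hb := S_bounds h hp
    have hp1 : 0 < 1 + p := by have := S_pos h hp; linarith
    calc Lmap p ≤ Lmap 1 := Lmap_le hp1 (by norm_num) hb.2
      _ = 1/2 := Lmap_one
  · -- gap in Lset
    intro q₁ q₂ hq₁ hq₂ hlt hcons
    rw [hcast]
    rw [hLset] at hq₁ hq₂
    exact gap_L h (by rw [hLset]) hq₁ hq₂ hlt hcons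
  · -- (n+3)/(n+5) ∈ Uset
    rw [hUset]
    refine ⟨1/((n:ℚ)+2), Or.inl h.1, ?_⟩
    rw [Umap_inv hj, hcast]
    ring_nf
  · -- upper bound for Uset
    intro q hq
    rw [hUset] at hq
    obtain ⟨p, hp, rfl⟩ := hq
    have hb := S_bounds h hp
    have hp3 : 0 < 1 + 3*p := by have := S_pos h hp; linarith
    have h1 : 0 < 1 + 3*(1/((n:ℚ)+2)) := by positivity
    calc Umap p ≤ Umap (1/((n:ℚ)+2)) := Umap_le hp3 h1 hb.1
      _ = ((n+3:ℕ):ℚ)/(((n+3:ℕ):ℚ)+2) := by rw [Umap_inv hj, hcast]; ring_nf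
  · -- 1/2 ∈ Uset
    rw [hUset]
    exact ⟨1, Or.inr rfl, Umap_one⟩
  · -- lower bound for Uset
    intro q hq
    rw [hUset] at hq
    obtain ⟨p, hp, rfl⟩ := hq
    have hb := S_bounds h hp
    have hp3 : 0 < 1 + 3*p := by have := S_pos h hp; linarith
    calc (1:ℚ)/2 = Umap 1 := Umap_one.symm
      _ ≤ Umap p := Umap_le (by norm_num) hp3 hb.2
  · -- gap in Uset
    intro q₁ q₂ hq₁ hq₂ hlt hcons
    rw [hcast]
    rw [hUset] at hq₁ hq₂
    obtain ⟨a, b, hblo, hba, ha1, hq1e, hq2e, hgap⟩ :=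
      gap_U h (by rw [hUset]) hq₁ hq₂ hlt hcons
    have hbpos : 0 < b := lt_of_lt_of_le (by positivity) hblo
    have hapos : 0 < a := lt_trans hbpos hba
    have h3a : 0 < 1 + 3*a := by linarith
    have h3b : 0 < 1 + 3*b := by linarith
    have hgap2 : (a - b) * ((n:ℚ)+3) ≤ (1+a)*(1+b) := by
      have := (le_div_iff₀ h3).mp hgap
      linarith
    have hbj : 1 ≤ b * ((n:ℚ)+2) := by
      have := (div_le_iff₀ hj).mp hblo
      linarith
    have haj : 1 ≤ a * ((n:ℚ)+2) := by nlinarith [hba.le]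
    have hsub : q₂ - q₁ = 2*(a-b)/((1+3*a)*(1+3*b)) := by
      rw [hq1e, hq2e]; exact Umap_sub h3a h3b
    rw [show (n:ℚ)+3+2 = (n:ℚ)+5 from by ring, hsub,
      div_le_div_iff₀ (by positivity) h5]
    have hK : ((n:ℚ)+5)*((1+a)*(1+b)) ≤ ((n:ℚ)+3)*((1+3*a)*(1+3*b)) := by
      nlinarith [haj, hbj, mul_pos hapos hbpos]
    have hH1 : 0 ≤ (1+a)*(1+b) - (a-b)*((n:ℚ)+3) := by linarith
    nlinarith [hK, mul_nonneg h5.le hH1, h3, mul_nonneg (mul_nonneg h3.le h3a.le) h3b.le]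
end

section
/- Define finite sets of rationals by L₁ = U₁ = W₁ = ∅ and, for every i ≥ 1, L_{i+1} = { q/(1+q) : q ∈ W_i ∪ {1} }, U_{i+1} = { (1+q)/(1+3q) : q ∈ W_i ∪ {1} }, and W_{i+1} = L_{i+1} ∪ U_{i+1}. Then for every real number r with 0 ≤ r ≤ 1 and every real ε with 0 < ε ≤ 1, setting i = max(3, ⌈2/ε⌉), there exists q ∈ W_i ∪ {1} such that |r − q| ≤ ε. -/
lemma Wset_succ_succ (n : ℕ) :
    Wset (n + 2) = (Lmap '' (Wset (n + 1) ∪ {1})) ∪ (Umap '' (Wset (n + 1) ∪ {1})) := rfl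

/-- invariant propagation for the `L` branch -/
lemma Lstep (a b N : ℚ) (ha0 : 0 ≤ a) (hab : a ≤ b) (hb1 : b ≤ 1) (hN : 4 ≤ N)
    (h : b - a ≤ 2 * (1 + a * b) / N) :
    Lmap b - Lmap a ≤ 2 * (1 + Lmap a * Lmap b) / (N + 1) := by
  have h1a : (0:ℚ) < 1 + a := by linarith
  have h1b : (0:ℚ) < 1 + b := by linarith
  have hN0 : (0:ℚ) < N := by linarith
  have h' : (b - a) * N ≤ 2 * (1 + a * b) := by
    have := mul_le_mul_of_nonneg_right h hN0.le
    rwa [div_mul_cancel₀ _ hN0.ne'] at this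
  have hD : (0:ℚ) < (1 + a) * (1 + b) := mul_pos h1a h1b
  have e1 : Lmap b - Lmap a = (b - a) / ((1 + a) * (1 + b)) := by
    unfold Lmap; field_simp; ring
  have e2 : 2 * (1 + Lmap a * Lmap b) / (N + 1)
      = (2 * ((1 + a) * (1 + b) + a * b)) / (((1 + a) * (1 + b)) * (N + 1)) := by
    unfold Lmap; field_simp; try ring
  rw [e1, e2, div_le_div_iff₀ hD (by positivity)]
  have hab0 : 0 ≤ a * b := mul_nonneg ha0 (ha0.trans hab)
  have S : (b - a) * (N + 1) ≤ 2 * ((1 + a) * (1 + b) + a * b) := by nlinarith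
  nlinarith [mul_le_mul_of_nonneg_right S hD.le]

/-- invariant propagation for the `U` branch -/
lemma Ustep (a b N : ℚ) (ha0 : 0 ≤ a) (hab : a ≤ b) (hb1 : b ≤ 1) (hN : 4 ≤ N)
    (h : b - a ≤ 2 * (1 + a * b) / N) :
    Umap a - Umap b ≤ 2 * (1 + Umap b * Umap a) / (N + 1) := by
  have h1a : (0:ℚ) < 1 + 3 * a := by linarith
  have h1b : (0:ℚ) < 1 + 3 * b := by linarith
  have hN0 : (0:ℚ) < N := by linarith
  have h' : (b - a) * N ≤ 2 * (1 + a * b) := by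
    have := mul_le_mul_of_nonneg_right h hN0.le
    rwa [div_mul_cancel₀ _ hN0.ne'] at this
  have hD : (0:ℚ) < (1 + 3 * a) * (1 + 3 * b) := mul_pos h1a h1b
  have e1 : Umap a - Umap b = 2 * (b - a) / ((1 + 3 * a) * (1 + 3 * b)) := by
    unfold Umap; field_simp; ring
  have e2 : 2 * (1 + Umap b * Umap a) / (N + 1)
      = (2 * ((1 + 3 * a) * (1 + 3 * b) + (1 + a) * (1 + b)))
        / (((1 + 3 * a) * (1 + 3 * b)) * (N + 1)) := by
    unfold Umap; rw [div_mul_div_comm, one_add_div (by positivity)]; field_simp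
  rw [e1, e2, div_le_div_iff₀ hD (by positivity)]
  have hab0 : 0 ≤ a * b := mul_nonneg ha0 (ha0.trans hab)
  have S : 2 * (b - a) * (N + 1)
      ≤ 2 * ((1 + 3 * a) * (1 + 3 * b) + (1 + a) * (1 + b)) := by nlinarith
  nlinarith [mul_le_mul_of_nonneg_right S hD.le]

/-- Main induction: every real in `[0,1]` lies in an interval `[a,b]` with endpoints in
`Wset (n+2) ∪ {0,1}` satisfying `b - a ≤ 2(1+ab)/(n+4)`. -/
lemma key (n : ℕ) : ∀ r : ℝ, 0 ≤ r → r ≤ 1 →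
    ∃ a b : ℚ, (a = 0 ∨ a ∈ Wset (n + 2) ∪ {1}) ∧ b ∈ Wset (n + 2) ∪ {1} ∧
      0 ≤ a ∧ a ≤ b ∧ b ≤ 1 ∧ ((a : ℝ) ≤ r) ∧ (r ≤ (b : ℝ)) ∧
      b - a ≤ 2 * (1 + a * b) / ((n : ℚ) + 4) := by
  induction n with
  | zero =>
    intro r hr0 hr1
    have hhalf : (1/2 : ℚ) ∈ Wset 2 ∪ {1} := by
      left
      rw [Wset_succ_succ 0]
      left
      exact ⟨1, by simp, by norm_num [Lmap]⟩
    rcases le_or_gt r (1/2) with h | h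
    · refine ⟨0, 1/2, Or.inl rfl, hhalf, le_refl 0, by norm_num, by norm_num,
        by exact_mod_cast hr0, by push_cast; linarith, by norm_num⟩
    · refine ⟨1/2, 1, Or.inr hhalf, Or.inr rfl, by norm_num, by norm_num, le_refl 1,
        by push_cast; linarith, by exact_mod_cast hr1, by norm_num⟩
  | succ n ih =>
    intro r hr0 hr1
    have hcast : ((n + 1 : ℕ) : ℚ) + 4 = ((n : ℚ) + 4) + 1 := by push_cast; ring
    have hN4 : (4:ℚ) ≤ (n : ℚ) + 4 := by
      have : (0:ℚ) ≤ (n : ℚ) := Nat.cast_nonneg n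
      linarith
    rcases le_or_gt r (1/2) with h | h
    · -- L branch
      have h1r : (0:ℝ) < 1 - r := by linarith
      set r' := r / (1 - r) with hr'def
      have hr'0 : 0 ≤ r' := div_nonneg hr0 h1r.le
      have hr'1 : r' ≤ 1 := by rw [hr'def, div_le_one h1r]; linarith
      obtain ⟨a, b, ha, hb, ha0, hab, hb1, har, hrb, hbound⟩ := ih r' hr'0 hr'1
      have h1a : (0:ℚ) < 1 + a := by linarith
      have h1b : (0:ℚ) < 1 + b := by linarith
      have h1aR : (0:ℝ) < 1 + (a:ℝ) := by exact_mod_cast h1a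
      have h1bR : (0:ℝ) < 1 + (b:ℝ) := by exact_mod_cast h1b
      have harR : (a:ℝ) * (1 - r) ≤ r := by
        have := (le_div_iff₀ h1r).mp har
        linarith
      have hrbR : r ≤ (b:ℝ) * (1 - r) := by
        have := (div_le_iff₀ h1r).mp hrb
        linarith
      refine ⟨Lmap a, Lmap b, ?_, ?_, ?_, ?_, ?_, ?_, ?_, ?_⟩
      · rcases ha with rfl | ha
        · left; norm_num [Lmap]
        · right; left; rw [Wset_succ_succ]; exact Or.inl ⟨a, ha, rfl⟩
      · left; rw [Wset_succ_succ]; exact Or.inl ⟨b, hb, rfl⟩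
      · exact div_nonneg ha0 h1a.le
      · rw [Lmap, Lmap, div_le_div_iff₀ h1a h1b]; nlinarith
      · rw [Lmap, div_le_one h1b]; linarith
      · show ((Lmap a : ℚ) : ℝ) ≤ r
        rw [Lmap]
        push_cast
        rw [div_le_iff₀ h1aR]
        nlinarith
      · show r ≤ ((Lmap b : ℚ) : ℝ)
        rw [Lmap]
        push_cast
        rw [le_div_iff₀ h1bR]
        nlinarith
      · rw [hcast]
        exact Lstep a b ((n : ℚ) + 4) ha0 hab hb1 hN4 hbound
    · -- U branch
      have h3r : (0:ℝ) < 3 * r - 1 := by linarith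
      have h1r' : (0:ℝ) ≤ 1 - r := by linarith
      set r' := (1 - r) / (3 * r - 1) with hr'def
      have hr'0 : 0 ≤ r' := div_nonneg h1r' h3r.le
      have hr'1 : r' ≤ 1 := by rw [hr'def, div_le_one h3r]; linarith
      obtain ⟨a, b, ha, hb, ha0, hab, hb1, har, hrb, hbound⟩ := ih r' hr'0 hr'1
      have h3a : (0:ℚ) < 1 + 3 * a := by linarith
      have h3b : (0:ℚ) < 1 + 3 * b := by linarith
      have h3aR : (0:ℝ) < 1 + 3 * (a:ℝ) := by exact_mod_cast h3a
      have h3bR : (0:ℝ) < 1 + 3 * (b:ℝ) := by exact_mod_cast h3b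
      have harR : (a:ℝ) * (3 * r - 1) ≤ 1 - r := by
        have := (le_div_iff₀ h3r).mp har
        linarith
      have hrbR : 1 - r ≤ (b:ℝ) * (3 * r - 1) := by
        have := (div_le_iff₀ h3r).mp hrb
        linarith
      refine ⟨Umap b, Umap a, ?_, ?_, ?_, ?_, ?_, ?_, ?_, ?_⟩
      · right; left; rw [Wset_succ_succ]; exact Or.inr ⟨b, hb, rfl⟩
      · rcases ha with rfl | ha
        · right; norm_num [Umap]
        · left; rw [Wset_succ_succ]; exact Or.inr ⟨a, ha, rfl⟩
      · exact div_nonneg (by linarith) h3b.le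
      · rw [Umap, Umap, div_le_div_iff₀ h3b h3a]; nlinarith
      · rw [Umap, div_le_one h3a]; linarith
      · show ((Umap b : ℚ) : ℝ) ≤ r
        rw [Umap]
        push_cast
        rw [div_le_iff₀ h3bR]
        nlinarith
      · show r ≤ ((Umap a : ℚ) : ℝ)
        rw [Umap]
        push_cast
        rw [le_div_iff₀ h3aR]
        nlinarith
      · rw [hcast]
        exact Ustep a b ((n : ℚ) + 4) ha0 hab hb1 hN4 hbound

theorem stmt_3 (r ε : ℝ) (hr0 : 0 ≤ r) (hr1 : r ≤ 1) (hε0 : 0 < ε) (hε1 : ε ≤ 1) :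
    ∃ q ∈ Wset (max 3 ⌈2 / ε⌉₊) ∪ {1}, |r - (q : ℝ)| ≤ ε := by
  set i := max 3 ⌈2 / ε⌉₊ with hi_def
  have hi3 : 3 ≤ i := le_max_left _ _
  have hi_eq : i - 2 + 2 = i := by omega
  have hεi : 2 ≤ ε * (i : ℝ) := by
    have h1 : 2 / ε ≤ (⌈2 / ε⌉₊ : ℝ) := Nat.le_ceil _
    have h2 : ((⌈2 / ε⌉₊ : ℕ) : ℝ) ≤ (i : ℝ) := by
      exact_mod_cast Nat.cast_le.mpr (le_max_right 3 ⌈2 / ε⌉₊)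
    have h3 : 2 / ε ≤ (i : ℝ) := h1.trans h2
    calc (2:ℝ) = (2 / ε) * ε := by field_simp
      _ ≤ (i : ℝ) * ε := mul_le_mul_of_nonneg_right h3 hε0.le
      _ = ε * (i : ℝ) := by ring
  have hi2ε : 2 / ((i : ℝ) + 2) ≤ ε := by
    have hipos : (0:ℝ) < (i : ℝ) + 2 := by positivity
    rw [div_le_iff₀ hipos]
    nlinarith
  obtain ⟨a, b, ha, hb, ha0, hab, hb1, har, hrb, hbound⟩ := key (i - 2) r hr0 hr1
  rw [hi_eq] at ha hb
  have hcast : ((i - 2 : ℕ) : ℚ) + 4 = (i : ℚ) + 2 := by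
    have h2i : 2 ≤ i := by omega
    have : ((i - 2 : ℕ) : ℚ) = (i : ℚ) - 2 := by
      push_cast [Nat.cast_sub h2i]
      ring
    rw [this]; ring
  rw [hcast] at hbound
  have hipoR : (0:ℝ) < (i : ℝ) + 2 := by positivity
  have hboundR : (b : ℝ) - (a : ℝ) ≤ 2 * (1 + (a:ℝ) * (b:ℝ)) / ((i : ℝ) + 2) := by
    exact_mod_cast hbound
  have ha0R : (0:ℝ) ≤ (a:ℝ) := by exact_mod_cast ha0
  have habR : (a:ℝ) ≤ (b:ℝ) := by exact_mod_cast hab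
  have hb1R : (b:ℝ) ≤ 1 := by exact_mod_cast hb1
  rcases ha with rfl | haW
  · -- a = 0 : use q = b
    refine ⟨b, hb, ?_⟩
    have hb2 : (b:ℝ) ≤ 2 / ((i : ℝ) + 2) := by
      have : ((0:ℚ):ℝ) = (0:ℝ) := by norm_num
      rw [this] at hboundR
      simp only [zero_mul, add_zero, mul_one] at hboundR
      linarith
    rw [abs_sub_comm, abs_of_nonneg (by linarith)]
    linarith
  · -- a ∈ Wset i ∪ {1}
    have hlen : (b:ℝ) - (a:ℝ) ≤ 4 / ((i : ℝ) + 2) := by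
      calc (b:ℝ) - (a:ℝ) ≤ 2 * (1 + (a:ℝ) * (b:ℝ)) / ((i : ℝ) + 2) := hboundR
        _ ≤ 4 / ((i : ℝ) + 2) := by gcongr <;> nlinarith
    have hhalf : 4 / ((i:ℝ) + 2) = 2 * (2 / ((i:ℝ) + 2)) := by ring
    rcases le_or_gt (r - (a:ℝ)) (((b:ℝ) - (a:ℝ)) / 2) with hc | hc
    · refine ⟨a, haW, ?_⟩
      rw [abs_of_nonneg (by linarith)]
      linarith
    · refine ⟨b, hb, ?_⟩
      rw [abs_sub_comm, abs_of_nonneg (by linarith)]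
      linarith
end

section
/- Let h : [0,1) → ℝ be defined by h(x) = (1/2)(1−x)(1+exp(2x/(x−1))). Then h is strictly decreasing on [0,1); the equation h(x) = x has a unique solution u in [0,1); this solution satisfies u ≤ 39/100; and the number w := u/(1−u) satisfies 1/2 ≤ w ≤ 64/100. -/
open Real Set

private lemma exp_key : (61:ℝ)/17 < Real.exp (78/61) := by
  have h := Real.sum_le_exp_of_nonneg (x := 78/61) (by norm_num) 9
  refine lt_of_lt_of_le ?_ h
  rw [Finset.sum_range_succ, Finset.sum_range_succ, Finset.sum_range_succ,
    Finset.sum_range_succ, Finset.sum_range_succ, Finset.sum_range_succ,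
    Finset.sum_range_succ, Finset.sum_range_succ, Finset.sum_range_succ]
  norm_num [Nat.factorial]

private lemma hanti : StrictAntiOn (fun x : ℝ => (1 / 2) * (1 - x) * (1 + Real.exp (2 * x / (x - 1))))
      (Set.Ico 0 1) := by
  intro x hx y hy hxy
  obtain ⟨hx0, hx1⟩ := hx
  obtain ⟨hy0, hy1⟩ := hy
  have hx1' : (0:ℝ) < 1 - x := by linarith
  have hy1' : (0:ℝ) < 1 - y := by linarith
  have harg : 2 * y / (y - 1) < 2 * x / (x - 1) := by
    have e1 : 2 * y / (y - 1) = (-(2*y)) / (1 - y) := by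
      rw [div_eq_div_iff (by linarith) (by linarith)]; ring
    have e2 : 2 * x / (x - 1) = (-(2*x)) / (1 - x) := by
      rw [div_eq_div_iff (by linarith) (by linarith)]; ring
    rw [e1, e2, div_lt_div_iff₀ hy1' hx1']
    nlinarith
  have hexp : Real.exp (2 * y / (y - 1)) < Real.exp (2 * x / (x - 1)) :=
    Real.exp_lt_exp.mpr harg
  have hpos : (0:ℝ) < 1 + Real.exp (2 * y / (y - 1)) := by positivity
  simp only
  nlinarith [Real.exp_pos (2 * x / (x - 1))]

theorem stmt_4 :
    StrictAntiOn (fun x : ℝ => (1 / 2) * (1 - x) * (1 + Real.exp (2 * x / (x - 1))))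
      (Set.Ico 0 1) ∧
    (∃! u : ℝ, u ∈ Set.Ico (0 : ℝ) 1 ∧
      (1 / 2) * (1 - u) * (1 + Real.exp (2 * u / (u - 1))) = u) ∧
    (∀ u ∈ Set.Ico (0 : ℝ) 1,
      (1 / 2) * (1 - u) * (1 + Real.exp (2 * u / (u - 1))) = u →
        u ≤ 39 / 100 ∧ 1 / 2 ≤ u / (1 - u) ∧ u / (1 - u) ≤ 64 / 100) := by
  set f : ℝ → ℝ := fun x => (1 / 2) * (1 - x) * (1 + Real.exp (2 * x / (x - 1))) with hf
  -- bounds for any fixed point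
  have hbnd : ∀ u ∈ Set.Ico (0 : ℝ) 1, f u = u →
      u ≤ 39 / 100 ∧ 1 / 2 ≤ u / (1 - u) ∧ u / (1 - u) ≤ 64 / 100 := by
    intro u hu hfu
    obtain ⟨hu0, hu1⟩ := hu
    have hu1' : (0:ℝ) < 1 - u := by linarith
    have h39 : u ≤ 39/100 := by
      by_contra h
      push_neg at h
      have hmem : (39/100 : ℝ) ∈ Set.Ico (0:ℝ) 1 := by norm_num
      have := hanti hmem ⟨hu0, hu1⟩ h
      have hval : f (39/100) ≤ 39/100 := by
        have harg : (2 * (39/100) / ((39/100 : ℝ) - 1)) = -(78/61) := by norm_num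
        have := exp_key
        have hle : Real.exp (-(78/61)) ≤ 17/61 := by
          rw [Real.exp_neg]
          rw [inv_le_comm₀ (Real.exp_pos _) (by norm_num)]
          · linarith
        simp only [hf, harg]
        nlinarith [Real.exp_pos (-(78/61:ℝ))]
      have : f u < 39/100 := lt_of_lt_of_le this hval
      rw [hfu] at this
      linarith
    have h13 : 1/3 ≤ u := by
      by_contra h
      push_neg at h
      have hmem : (1/3 : ℝ) ∈ Set.Ico (0:ℝ) 1 := by norm_num
      have := hanti ⟨hu0, hu1⟩ hmem h
      have hval : (1:ℝ)/3 < f (1/3) := by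
        have harg : (2 * (1/3) / ((1/3 : ℝ) - 1)) = -1 := by norm_num
        simp only [hf, harg]
        nlinarith [Real.exp_pos (-1:ℝ)]
      have : (1:ℝ)/3 < f u := lt_trans hval this
      rw [hfu] at this
      linarith
    refine ⟨h39, ?_, ?_⟩
    · rw [le_div_iff₀ hu1']; linarith
    · rw [div_le_iff₀ hu1']; linarith
  refine ⟨hanti, ?_, hbnd⟩
  -- existence
  have hcont : ContinuousOn f (Set.Icc (0:ℝ) (1/2)) := by
    apply ContinuousOn.mul
    · fun_prop
    · apply ContinuousOn.add continuousOn_const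
      apply Real.continuous_exp.comp_continuousOn
      apply ContinuousOn.div (by fun_prop) (by fun_prop)
      intro x hx
      obtain ⟨_, hx2⟩ := hx
      intro h
      have : x = 1 := by linarith [sub_eq_zero.mp h]
      linarith
  have hgcont : ContinuousOn (fun x => f x - x) (Set.Icc (0:ℝ) (1/2)) :=
    hcont.sub continuousOn_id
  have h0 : (fun x => f x - x) 0 = 1 := by
    simp [hf]; norm_num
  have hhalf : (fun x => f x - x) (1/2) < 0 := by
    have harg : (2 * (1/2) / ((1/2 : ℝ) - 1)) = -2 := by norm_num
    have : Real.exp (-2:ℝ) < 1 := Real.exp_lt_one_iff.mpr (by norm_num)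
    simp only [hf, harg]
    nlinarith
  have hiv : (0:ℝ) ∈ Set.Icc ((fun x => f x - x) (1/2)) ((fun x => f x - x) 0) := by
    constructor
    · linarith
    · rw [h0]; norm_num
  have := intermediate_value_Icc' (by norm_num : (0:ℝ) ≤ 1/2) hgcont hiv
  obtain ⟨u, hu, hfu⟩ := this
  have hu' : u ∈ Set.Ico (0:ℝ) 1 := ⟨hu.1, by linarith [hu.2]⟩
  have hfix : f u = u := by
    have : f u - u = 0 := hfu
    linarith
  have hfix' : (1/2)*(1-u)*(1+Real.exp (2*u/(u-1))) = u := hfix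
  refine ⟨u, ⟨hu', hfix⟩, ?_⟩
  rintro v ⟨hv, hfv⟩
  by_contra hne
  rcases lt_or_gt_of_ne hne with h | h
  · have := hanti hv hu' h
    simp only at this
    rw [hfv, hfix'] at this
    linarith
  · have := hanti hu' hv h
    simp only at this
    rw [hfv, hfix'] at this
    linarith
end

section
/- Let x, y ≥ 0 be real numbers satisfying x·e^x ≤ cosh x and y·e^y ≤ cosh y. Define z₁ = cosh(x+y) + y·e^y·cosh x + x·e^x·sinh y, z₂ = x·e^x·cosh y + y·e^y·sinh x, and z₃ = x·y·e^{x+y} + sinh x · cosh y. Then z₁ ≥ z₂ ≥ z₃. In particular, z₂ − z₃ = (x e^x − sinh x)(cosh y − y e^y) ≥ 0. -/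
lemma sinh_le_mul_exp (x : ℝ) (hx : 0 ≤ x) : Real.sinh x ≤ x * Real.exp x := by
  have h1 : (-2 * x) + 1 ≤ Real.exp (-2 * x) := Real.add_one_le_exp _
  have h2 : Real.exp (-2 * x) * Real.exp x = Real.exp (-x) := by
    rw [← Real.exp_add]; ring_nf
  have hex : (0:ℝ) < Real.exp x := Real.exp_pos x
  rw [Real.sinh_eq]
  nlinarith [mul_le_mul_of_nonneg_right h1 hex.le]

theorem stmt_8 (x y : ℝ) (hx : 0 ≤ x) (hy : 0 ≤ y)
    (hxb : x * Real.exp x ≤ Real.cosh x) (hyb : y * Real.exp y ≤ Real.cosh y) :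
    Real.cosh (x + y) + y * Real.exp y * Real.cosh x + x * Real.exp x * Real.sinh y ≥
        x * Real.exp x * Real.cosh y + y * Real.exp y * Real.sinh x ∧
    x * Real.exp x * Real.cosh y + y * Real.exp y * Real.sinh x ≥
        x * y * Real.exp (x + y) + Real.sinh x * Real.cosh y ∧
    (x * Real.exp x * Real.cosh y + y * Real.exp y * Real.sinh x) -
        (x * y * Real.exp (x + y) + Real.sinh x * Real.cosh y) =
      (x * Real.exp x - Real.sinh x) * (Real.cosh y - y * Real.exp y) ∧
    (x * Real.exp x - Real.sinh x) * (Real.cosh y - y * Real.exp y) ≥ 0 := by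
  have hsx := sinh_le_mul_exp x hx
  have hsy := sinh_le_mul_exp y hy
  have hprod : (x * Real.exp x - Real.sinh x) * (Real.cosh y - y * Real.exp y) ≥ 0 :=
    mul_nonneg (by linarith) (by linarith)
  have heq : (x * Real.exp x * Real.cosh y + y * Real.exp y * Real.sinh x) -
        (x * y * Real.exp (x + y) + Real.sinh x * Real.cosh y) =
      (x * Real.exp x - Real.sinh x) * (Real.cosh y - y * Real.exp y) := by
    rw [Real.exp_add]; ring
  refine ⟨?_, by linarith, heq, hprod⟩
  -- first inequality
  have hex : (0:ℝ) < Real.exp x := Real.exp_pos x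
  have hey : (0:ℝ) < Real.exp y := Real.exp_pos y
  have hexn : (0:ℝ) < Real.exp (-x) := Real.exp_pos _
  have heyn : (0:ℝ) < Real.exp (-y) := Real.exp_pos _
  have hxy : Real.exp x ≤ Real.exp (x + y) := Real.exp_le_exp.mpr (by linarith)
  have h1 : x * Real.exp x * Real.exp (-y) ≤ Real.cosh x * Real.exp (-y) :=
    mul_le_mul_of_nonneg_right hxb heyn.le
  have hxx : Real.exp x * Real.exp (-x) = 1 := by rw [← Real.exp_add]; simp
  have hyy : Real.exp y * Real.exp (-y) = 1 := by rw [← Real.exp_add]; simp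
  rw [Real.cosh_eq, Real.cosh_eq, Real.cosh_eq, Real.sinh_eq, Real.sinh_eq,
    Real.exp_add, neg_add, Real.exp_add] at *
  nlinarith [mul_nonneg (mul_nonneg hy hey.le) hexn.le,
    mul_le_mul_of_nonneg_right hxy (mul_nonneg hexn.le heyn.le)]
end

section
/- Let D be a compact, simply connected subset of ℝ², and let g : ℝ² → ℝ² be continuously differentiable on a neighborhood of D. Assume that the image g(∂D) of the topological boundary of D is a simple closed curve (i.e., the image of a continuous injective map from the circle), and that the Jacobian determinant of g does not vanish at any point of the interior of D. Then g(D) is contained in the union of g(∂D) and the bounded connected components of the complement ℝ² \ g(∂D); equivalently, g(D) does not meet the unbounded connected component of ℝ² \ g(∂D). -/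
theorem stmt_10 (D : Set (ℝ × ℝ)) (g : ℝ × ℝ → ℝ × ℝ)
    (hDcomp : IsCompact D) (hDsc : SimplyConnectedSpace D)
    (U : Set (ℝ × ℝ)) (hUopen : IsOpen U) (hDU : D ⊆ U) (hg : ContDiffOn ℝ 1 g U)
    (γ : Circle → ℝ × ℝ) (hγc : Continuous γ) (hγi : Function.Injective γ)
    (hγr : Set.range γ = g '' frontier D)
    (hjac : ∀ z ∈ interior D, (fderiv ℝ g z).det ≠ 0) :
    ∀ z ∈ D, g z ∉ g '' frontier D →
      Bornology.IsBounded (connectedComponentIn (g '' frontier D)ᶜ (g z)) := by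
  intro z hzD hzB
  -- g is open on interior D
  have hopen : IsOpen (g '' interior D) := by
    rw [isOpen_iff_mem_nhds]
    rintro y ⟨x, hx, rfl⟩
    have hxU : x ∈ U := hDU (interior_subset hx)
    have hca : ContDiffAt ℝ 1 g x := hg.contDiffAt (hUopen.mem_nhds hxU)
    have hdet := hjac x hx
    have hs : HasStrictFDerivAt g (fderiv ℝ g x) x := hca.hasStrictFDerivAt one_ne_zero
    set e : (ℝ × ℝ) ≃ₗ[ℝ] (ℝ × ℝ) :=
      LinearMap.equivOfDetNeZero (fderiv ℝ g x).toLinearMap hdet with he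
    have hcoe : ((e.toContinuousLinearEquiv : (ℝ × ℝ) →L[ℝ] (ℝ × ℝ)) : (ℝ×ℝ) →L[ℝ] ℝ×ℝ)
        = fderiv ℝ g x := by
      apply ContinuousLinearMap.coe_injective
      ext v <;>
      simp [he, LinearEquiv.coe_toContinuousLinearEquiv']
    have hs' : HasStrictFDerivAt g
        (e.toContinuousLinearEquiv : (ℝ × ℝ) →L[ℝ] (ℝ × ℝ)) x := by
      rw [hcoe]; exact hs
    have hmap := hs'.map_nhds_eq_of_equiv
    rw [← hmap]
    exact Filter.image_mem_map (isOpen_interior.mem_nhds hx)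
  -- z is in interior D
  have hzint : z ∈ interior D := by
    by_contra h
    exact hzB ⟨z, ⟨subset_closure hzD, h⟩, rfl⟩
  -- g(D) is compact
  have hgc : IsCompact (g '' D) := hDcomp.image_of_continuousOn (hg.continuousOn.mono hDU)
  -- frontier (g '' D) ⊆ g '' frontier D
  have hfr : frontier (g '' D) ⊆ g '' frontier D := by
    intro y hy
    have hy1 : y ∈ g '' D := hgc.isClosed.frontier_subset hy
    have hy2 : y ∉ interior (g '' D) := hy.2
    rcases hy1 with ⟨x, hx, rfl⟩
    rcases (em (x ∈ interior D)) with hxi | hxi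
    · exact absurd (interior_maximal (Set.image_mono (f := g) interior_subset) hopen
        ⟨x, hxi, rfl⟩) hy2
    · exact ⟨x, ⟨subset_closure hx, hxi⟩, rfl⟩
  set C := connectedComponentIn (g '' frontier D)ᶜ (g z) with hC
  have hCsub : C ⊆ (g '' frontier D)ᶜ := connectedComponentIn_subset _ _
  have hCconn : IsPreconnected C := (isConnected_connectedComponentIn_iff.mpr (Set.mem_compl hzB)).isPreconnected
  have hzC : g z ∈ C := mem_connectedComponentIn (Set.mem_compl hzB)
  -- C ⊆ closure (g '' D)
  have hmain : C ⊆ closure (g '' D) := by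
    by_contra h
    rw [Set.not_subset] at h
    obtain ⟨w, hwC, hw⟩ := h
    have hcover : C ⊆ interior (g '' D) ∪ (closure (g '' D))ᶜ := by
      intro p hpC
      rcases em (p ∈ closure (g '' D)) with hp | hp
      · left
        rcases em (p ∈ interior (g '' D)) with h1 | h1
        · exact h1
        · exact absurd (hfr ⟨hp, h1⟩) (hCsub hpC)
      · right; exact hp
    have := hCconn _ _ isOpen_interior (isClosed_closure.isOpen_compl) hcover
      ⟨g z, hzC, interior_maximal (Set.image_mono (f := g) interior_subset) hopen ⟨z, hzint, rfl⟩⟩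
      ⟨w, hwC, hw⟩
    obtain ⟨p, _, hp1, hp2⟩ := this
    exact hp2 (subset_closure (interior_subset hp1))
  exact (hgc.isBounded.closure).subset hmain
end

section
/- For every real number x with 0 < x < 16/25, one has 4x·e^{2x} + 4x²·e^{2x} + 1 − e^{4x} > 0. -/
theorem stmt_11 (x : ℝ) (h0 : 0 < x) (h1 : x < 16 / 25) :
    0 < 4 * x * Real.exp (2 * x) + 4 * x ^ 2 * Real.exp (2 * x) + 1 - Real.exp (4 * x) := by
  have hx1 : x ≤ 1 := by linarith
  have hb : (0:ℝ) < 16 / 25 - x := by linarith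
  have hu : Real.exp x ≤ (∑ m ∈ Finset.range 3, x ^ m / m.factorial) +
      x ^ 3 * (3 + 1) / (Nat.factorial 3 * 3) :=
    Real.exp_bound' h0.le hx1 (by norm_num)
  have hu' : Real.exp x ≤ 1 + x + x ^ 2 / 2 + x ^ 3 * (2 / 9) := by
    simp [Finset.sum_range_succ, Nat.factorial] at hu
    nlinarith [hu]
  have hl : (∑ i ∈ Finset.range 4, (2 * x) ^ i / i.factorial) ≤ Real.exp (2 * x) :=
    Real.sum_le_exp_of_nonneg (by linarith) 4
  have hl' : 1 + 2 * x + 2 * x ^ 2 + (4 / 3) * x ^ 3 ≤ Real.exp (2 * x) := by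
    simp [Finset.sum_range_succ, Nat.factorial] at hl
    nlinarith [hl]
  have h2 : Real.exp (2 * x) = Real.exp x ^ 2 := by
    rw [← Real.exp_nat_mul]; ring_nf
  have h4 : Real.exp (4 * x) = Real.exp x ^ 4 := by
    rw [← Real.exp_nat_mul]; ring_nf
  have hep : (0:ℝ) < Real.exp x := Real.exp_pos x
  have hUpos : (0:ℝ) < 1 + x + x ^ 2 / 2 + x ^ 3 * (2 / 9) := by positivity
  have hE4 : Real.exp x ^ 4 ≤ (1 + x + x ^ 2 / 2 + x ^ 3 * (2 / 9)) ^ 4 :=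
    pow_le_pow_left₀ hep.le hu' 4
  have key : 0 < 4 * x * (1 + 2 * x + 2 * x ^ 2 + (4 / 3) * x ^ 3)
      + 4 * x ^ 2 * (1 + 2 * x + 2 * x ^ 2 + (4 / 3) * x ^ 3) + 1
      - (1 + x + x ^ 2 / 2 + x ^ 3 * (2 / 9)) ^ 4 := by
    nlinarith [mul_pos (pow_pos h0 2) (pow_pos hb 10),
      mul_pos (pow_pos h0 3) (pow_pos hb 9),
      mul_pos (pow_pos h0 4) (pow_pos hb 8),
      mul_pos (pow_pos h0 5) (pow_pos hb 7),
      mul_pos (pow_pos h0 6) (pow_pos hb 6),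
      mul_pos (pow_pos h0 7) (pow_pos hb 5),
      mul_pos (pow_pos h0 8) (pow_pos hb 4),
      mul_pos (pow_pos h0 9) (pow_pos hb 3),
      mul_pos (pow_pos h0 10) (pow_pos hb 2),
      mul_pos (pow_pos h0 11) (pow_pos hb 1),
      pow_pos h0 12]
  have t1 : 4 * x * (1 + 2 * x + 2 * x ^ 2 + (4 / 3) * x ^ 3) ≤ 4 * x * Real.exp (2 * x) := by
    have := mul_le_mul_of_nonneg_left hl' (by linarith : (0:ℝ) ≤ 4 * x)
    linarith
  have t2 : 4 * x ^ 2 * (1 + 2 * x + 2 * x ^ 2 + (4 / 3) * x ^ 3)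
      ≤ 4 * x ^ 2 * Real.exp (2 * x) := by
    have := mul_le_mul_of_nonneg_left hl' (by positivity : (0:ℝ) ≤ 4 * x ^ 2)
    linarith
  rw [h4]
  linarith
end

section
/- For every c ∈ [0, 1/2], the function f_c : [0,1) → ℝ defined by f_c(x) = −(1/2)(x−1)(1 + (2c−1)·exp(2x/(x−1))) is concave on [0,1). -/
private lemma hasDerivAt_g (x : ℝ) (hx : x - 1 ≠ 0) :
    HasDerivAt (fun x : ℝ => 2 * x / (x - 1)) (-2 / (x - 1) ^ 2) x := by
  have h1 : HasDerivAt (fun x : ℝ => 2 * x) 2 x := by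
    simpa using (hasDerivAt_id x).const_mul 2
  have h2 : HasDerivAt (fun x : ℝ => x - 1) 1 x := (hasDerivAt_id x).sub_const 1
  have := h1.div h2 hx
  refine this.congr_deriv ?_
  field_simp
  ring

private lemma hasDerivAt_f (a : ℝ) (x : ℝ) (hx : x - 1 ≠ 0) :
    HasDerivAt (fun x : ℝ => -(1 / 2) * (x - 1) * (1 + a * Real.exp (2 * x / (x - 1))))
      (-(1 / 2) - (1 / 2) * a * Real.exp (2 * x / (x - 1)) * (1 - 2 / (x - 1))) x := by
  have hg := hasDerivAt_g x hx
  have hexp := hg.exp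
  have h3 := (hexp.const_mul a).const_add 1
  have h2 : HasDerivAt (fun x : ℝ => x - 1) 1 x := (hasDerivAt_id x).sub_const 1
  have h4 : HasDerivAt (fun x : ℝ => -(1 / 2) * (x - 1)) (-(1 / 2)) x := by
    have := h2.const_mul (-(1 / 2) : ℝ)
    simpa using this.congr_deriv (by norm_num)
  have h5 := h4.mul h3
  refine h5.congr_deriv ?_
  field_simp
  ring

private lemma hasDerivAt_f' (a : ℝ) (x : ℝ) (hx : x - 1 ≠ 0) :
    HasDerivAt (fun x : ℝ => -(1 / 2) - (1 / 2) * a * Real.exp (2 * x / (x - 1)) * (1 - 2 / (x - 1)))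
      (-2 * a * Real.exp (2 * x / (x - 1)) / (x - 1) ^ 3) x := by
  have hg := hasDerivAt_g x hx
  have hexp := hg.exp
  have h2 : HasDerivAt (fun x : ℝ => x - 1) 1 x := (hasDerivAt_id x).sub_const 1
  have h6 : HasDerivAt (fun x : ℝ => 1 - 2 / (x - 1)) (2 / (x - 1) ^ 2) x := by
    have := ((hasDerivAt_const x (2 : ℝ)).div h2 hx).const_sub 1
    refine this.congr_deriv ?_
    field_simp
    ring
  have h7 := ((hexp.mul h6).const_mul ((1 / 2) * a)).const_sub (-(1 / 2))
  have heq : (fun x : ℝ => -(1 / 2) - (1 / 2) * a * Real.exp (2 * x / (x - 1)) * (1 - 2 / (x - 1)))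
      = fun x : ℝ => -(1 / 2) - (1 / 2) * a * (Real.exp (2 * x / (x - 1)) * (1 - 2 / (x - 1))) := by
    funext y; ring
  rw [heq]
  refine h7.congr_deriv ?_
  field_simp
  ring

theorem stmt_12 (c : ℝ) (hc : c ∈ Set.Icc (0 : ℝ) (1 / 2)) :
    ConcaveOn ℝ (Set.Ico (0 : ℝ) 1)
      (fun x : ℝ => -(1 / 2) * (x - 1) * (1 + (2 * c - 1) * Real.exp (2 * x / (x - 1)))) := by
  set a : ℝ := 2 * c - 1 with ha
  have haneg : a ≤ 0 := by simp only [ha]; linarith [hc.2]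
  set f : ℝ → ℝ := fun x => -(1 / 2) * (x - 1) * (1 + a * Real.exp (2 * x / (x - 1))) with hf
  set f' : ℝ → ℝ := fun x => -(1 / 2) - (1 / 2) * a * Real.exp (2 * x / (x - 1)) * (1 - 2 / (x - 1)) with hf'
  have hint : interior (Set.Ico (0 : ℝ) 1) = Set.Ioo 0 1 := interior_Ico
  have hxne : ∀ x ∈ Set.Ico (0 : ℝ) 1, x - 1 ≠ 0 := fun x hx => by
    have := hx.2; intro h; linarith [sub_eq_zero.mp h]
  -- deriv f = f' on neighborhoods of points ≠ 1
  have hderiv_eq : ∀ x : ℝ, x - 1 ≠ 0 → deriv f =ᶠ[nhds x] f' := by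
    intro x hx
    have hopen : IsOpen {y : ℝ | y - 1 ≠ 0} := by
      have : {y : ℝ | y - 1 ≠ 0} = {(1 : ℝ)}ᶜ := by
        ext y; simp [sub_eq_zero]
      rw [this]; exact isOpen_compl_singleton
    filter_upwards [hopen.mem_nhds hx] with y hy
    exact (hasDerivAt_f a y hy).deriv
  apply concaveOn_of_deriv2_nonpos (convex_Ico 0 1)
  · -- continuity
    apply ContinuousOn.mul
    · exact (continuous_const.mul (continuous_id.sub continuous_const)).continuousOn
    · apply ContinuousOn.add continuousOn_const
      apply ContinuousOn.mul continuousOn_const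
      apply Real.continuous_exp.comp_continuousOn
      exact ContinuousOn.div (continuous_const.mul continuous_id).continuousOn
        ((continuous_id.sub continuous_const)).continuousOn hxne
  · rw [hint]
    intro x hx
    exact ((hasDerivAt_f a x (hxne x (Set.mem_Ico.mpr ⟨le_of_lt hx.1, hx.2⟩))).differentiableAt).differentiableWithinAt
  · rw [hint]
    intro x hx
    have hx1 : x - 1 ≠ 0 := hxne x ⟨le_of_lt hx.1, hx.2⟩
    have : DifferentiableAt ℝ (deriv f) x :=
      (hasDerivAt_f' a x hx1).differentiableAt.congr_of_eventuallyEq (hderiv_eq x hx1)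
    exact this.differentiableWithinAt
  · rw [hint]
    intro x hx
    have hx1 : x - 1 ≠ 0 := hxne x ⟨le_of_lt hx.1, hx.2⟩
    have h2 : deriv (deriv f) x = -2 * a * Real.exp (2 * x / (x - 1)) / (x - 1) ^ 3 := by
      rw [(hderiv_eq x hx1).deriv_eq]
      exact (hasDerivAt_f' a x hx1).deriv
    show deriv (deriv f) x ≤ 0
    rw [h2]
    apply div_nonpos_of_nonneg_of_nonpos
    · have := Real.exp_pos (2 * x / (x - 1))
      nlinarith
    · have hlt : x - 1 < 0 := by linarith [hx.2]
      have : (x - 1) ^ 3 = (x - 1) * (x - 1) ^ 2 := by ring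
      rw [this]
      exact mul_nonpos_of_nonpos_of_nonneg hlt.le (sq_nonneg _)
end

section
/- For every c ∈ [0, 1/2], the equation f_c(x) = x, where f_c(x) = −(1/2)(x−1)(1 + (2c−1)·exp(2x/(x−1))), has at least one solution x in the interval [0, 1/3]. -/
theorem stmt_14 (c : ℝ) (hc : c ∈ Set.Icc (0 : ℝ) (1 / 2)) :
    ∃ x ∈ Set.Icc (0 : ℝ) (1 / 3),
      -(1 / 2) * (x - 1) * (1 + (2 * c - 1) * Real.exp (2 * x / (x - 1))) = x := by
  obtain ⟨hc0, hc2⟩ := hc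
  set g : ℝ → ℝ := fun x =>
    -(1 / 2) * (x - 1) * (1 + (2 * c - 1) * Real.exp (2 * x / (x - 1))) - x with hg
  have hcont : ContinuousOn g (Set.Icc (0 : ℝ) (1 / 3)) := by
    apply ContinuousOn.sub _ continuousOn_id
    apply ContinuousOn.mul
    · fun_prop
    · apply ContinuousOn.add continuousOn_const
      apply ContinuousOn.mul continuousOn_const
      apply Real.continuous_exp.comp_continuousOn
      apply ContinuousOn.div (by fun_prop) (by fun_prop)
      intro x hx
      have := hx.2
      nlinarith
  have h0 : g 0 = c := by
    simp [hg]
  have h13 : g (1 / 3) ≤ 0 := by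
    have he : Real.exp (2 * (1 / 3 : ℝ) / (1 / 3 - 1)) = Real.exp (-1) := by norm_num
    have hep : (0 : ℝ) < Real.exp (-1) := Real.exp_pos _
    simp only [hg]
    rw [he]
    nlinarith [Real.exp_pos (-1 : ℝ)]
  have hsub := intermediate_value_Icc' (by norm_num : (0:ℝ) ≤ 1/3) hcont
  have : (0 : ℝ) ∈ Set.Icc (g (1/3)) (g 0) := ⟨h13, by rw [h0]; exact hc0⟩
  obtain ⟨x, hx, hgx⟩ := hsub this
  refine ⟨x, hx, ?_⟩
  simp only [hg] at hgx
  linarith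
end
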